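/- Let σ : ℝ → ℝ be twice continuously differentiable, let r, q ∈ ℝ, T > 0, and define β(u) = (1/2) σ(u)² u. Let V : (0,∞) × [0,T] → ℝ be such that all partial derivatives ∂_t V, ∂_S V, ∂_S² V, ∂_S³ V, ∂_S⁴ V and the mixed derivative ∂_t ∂_S² V exist and are continuous, and suppose V solves the nonlinear Black–Scholes equation ∂_t V + (1/2) σ(S ∂_S² V)² S² ∂_S² V + (r − q) S ∂_S V − r V = 0 for all S > 0 and t ∈ [0,T). Define H(x,τ) := S ∂_S² V(S,t) with S = eˣ and t = T − τ. Then H satisfies the Gamma equation ∂_τ H = ∂_x² β(H) + ∂_x β(H) + (r − q) ∂_x H − q H for all x ∈ ℝ and τ ∈ (0,T]. -/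

import Mathlib

set_option maxHeartbeats 1000000

open MeasureTheory Set Function intervalIntegral
open scoped Interval

lemma my_exists_cont_ext {X : Type*} [TopologicalSpace X] [NormalSpace X]
    {s : Set X} (hs : IsClosed s) {f : X → ℝ} (hf : ContinuousOn f s) :
    ∃ g : X → ℝ, Continuous g ∧ ∀ p ∈ s, g p = f p := by
  obtain ⟨g, hg⟩ := ContinuousMap.exists_restrict_eq (Y := ℝ) hs
      ⟨s.restrict f, continuousOn_iff_continuous_restrict.mp hf⟩
  refine ⟨g, g.continuous, fun p hp => ?_⟩
  have := congrFun (congrArg ContinuousMap.toFun hg) ⟨p, hp⟩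
  exact this

lemma my_swap_cont {F : ℝ → ℝ → ℝ} (hF : Continuous (Function.uncurry F))
    (c d p q : ℝ) :
    (∫ v in c..d, ∫ u in p..q, F v u) = ∫ u in p..q, ∫ v in c..d, F v u := by
  have hint : Integrable (Function.uncurry F)
      ((volume.restrict (Ι c d)).prod (volume.restrict (Ι p q))) := by
    rw [Measure.prod_restrict]
    exact (hF.continuousOn.integrableOn_compact (isCompact_uIcc.prod isCompact_uIcc)).mono_set
      (Set.prod_mono uIoc_subset_uIcc uIoc_subset_uIcc)
  have key : (∫ v in Ι c d, ∫ u in Ι p q, F v u) = ∫ u in Ι p q, ∫ v in Ι c d, F v u :=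
    MeasureTheory.integral_integral_swap hint
  simp only [intervalIntegral_eq_integral_uIoc, smul_eq_mul,
    MeasureTheory.integral_const_mul]
  rw [key]; split_ifs <;> ring

lemma my_hasDerivAt_primitive {f : ℝ → ℝ} (hf : Continuous f) (a b : ℝ) :
    HasDerivAt (fun u => ∫ x in a..u, f x) (f b) b :=
  intervalIntegral.integral_hasDerivAt_right (hf.intervalIntegrable a b)
    (hf.stronglyMeasurableAtFilter _ _) hf.continuousAt



/-- Transformation of the nonlinear Black–Scholes equation
`∂_t V + (1/2) σ(S ∂_S² V)² S² ∂_S² V + (r − q) S ∂_S V − r V = 0`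
into the Gamma equation
`∂_τ H = ∂_x² β(H) + ∂_x β(H) + (r − q) ∂_x H − q H`
via `H(x,τ) = S ∂_S² V(S,t)`, `S = eˣ`, `t = T − τ`, `β(u) = (1/2) σ(u)² u`. -/
theorem blackScholes_to_gamma_equation
    (σ : ℝ → ℝ) (hσ : ContDiff ℝ 2 σ)
    (r q T : ℝ) (hT : 0 < T)
    (V : ℝ → ℝ → ℝ)
    -- existence of the partial derivatives ∂_t V, ∂_S V, ∂_S² V, ∂_S³ V, ∂_S⁴ V
    -- and of the mixed derivative ∂_t ∂_S² V on (0,∞) × [0,T]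
    (hdiff : ∀ S ∈ Set.Ioi (0 : ℝ), ∀ t ∈ Set.Icc (0 : ℝ) T,
      DifferentiableAt ℝ (fun t' => V S t') t ∧
      DifferentiableAt ℝ (fun S' => V S' t) S ∧
      DifferentiableAt ℝ (deriv (fun S' => V S' t)) S ∧
      DifferentiableAt ℝ (deriv (deriv (fun S' => V S' t))) S ∧
      DifferentiableAt ℝ (deriv (deriv (deriv (fun S' => V S' t)))) S ∧
      DifferentiableAt ℝ (fun t' => deriv (deriv (fun S' => V S' t')) S) t)
    -- continuity of those partial derivatives on (0,∞) × [0,T]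
    (hcont_t : ContinuousOn (fun p : ℝ × ℝ => deriv (fun t' => V p.1 t') p.2)
      (Set.Ioi 0 ×ˢ Set.Icc 0 T))
    (hcont_S : ContinuousOn (fun p : ℝ × ℝ => deriv (fun S' => V S' p.2) p.1)
      (Set.Ioi 0 ×ˢ Set.Icc 0 T))
    (hcont_SS : ContinuousOn (fun p : ℝ × ℝ => deriv (deriv (fun S' => V S' p.2)) p.1)
      (Set.Ioi 0 ×ˢ Set.Icc 0 T))
    (hcont_SSS :
      ContinuousOn (fun p : ℝ × ℝ => deriv (deriv (deriv (fun S' => V S' p.2))) p.1)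
      (Set.Ioi 0 ×ˢ Set.Icc 0 T))
    (hcont_SSSS :
      ContinuousOn
        (fun p : ℝ × ℝ => deriv (deriv (deriv (deriv (fun S' => V S' p.2)))) p.1)
      (Set.Ioi 0 ×ˢ Set.Icc 0 T))
    (hcont_tSS :
      ContinuousOn (fun p : ℝ × ℝ => deriv (fun t' => deriv (deriv (fun S' => V S' t')) p.1) p.2)
      (Set.Ioi 0 ×ˢ Set.Icc 0 T))
    -- V solves the nonlinear Black–Scholes equation
    (hBS : ∀ S ∈ Set.Ioi (0 : ℝ), ∀ t ∈ Set.Ico (0 : ℝ) T,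
      deriv (fun t' => V S t') t +
        (1 / 2) * (σ (S * deriv (deriv (fun S' => V S' t)) S))^2 * S^2 *
          deriv (deriv (fun S' => V S' t)) S +
        (r - q) * S * deriv (fun S' => V S' t) S - r * V S t = 0)
    -- H is the transformed function H(x,τ) = S ∂_S² V(S,t), S = eˣ, t = T − τ
    (H : ℝ → ℝ → ℝ)
    (hH : ∀ x τ : ℝ, H x τ =
      Real.exp x * deriv (deriv (fun S' => V S' (T - τ))) (Real.exp x)) :
    ∀ x : ℝ, ∀ τ ∈ Set.Ioc (0 : ℝ) T,
      deriv (fun s => H x s) τ =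
        deriv (deriv (fun y => (1 / 2) * (σ (H y τ))^2 * H y τ)) x +
        deriv (fun y => (1 / 2) * (σ (H y τ))^2 * H y τ) x +
        (r - q) * deriv (fun y => H y τ) x - q * H x τ := by
  intro x τ hτ
  obtain ⟨hτ0, hτT⟩ := hτ
  set t₀ : ℝ := T - τ with ht₀def
  have ht₀Ico : t₀ ∈ Set.Ico 0 T := ⟨by rw [ht₀def]; linarith, by rw [ht₀def]; linarith⟩
  have ht₀Icc : t₀ ∈ Set.Icc 0 T := ⟨ht₀Ico.1, ht₀Ico.2.le⟩
  set S₀ : ℝ := Real.exp x with hS₀def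
  have hS₀pos : 0 < S₀ := hS₀def ▸ Real.exp_pos x
  set a : ℝ := S₀ / 2 with hadef
  set b : ℝ := 2 * S₀ with hbdef
  have haS₀ : a < S₀ := by rw [hadef]; linarith
  have hS₀b : S₀ < b := by rw [hbdef]; linarith
  have hS₀ab : S₀ ∈ Set.Icc a b := ⟨haS₀.le, hS₀b.le⟩
  have hbab : b ∈ Set.Icc a b := ⟨by linarith, le_rfl⟩
  have hsub : Set.Icc a b ⊆ Set.Ioi (0:ℝ) := by
    intro y hy
    have h1 := hy.1
    rw [hadef] at h1
    simp only [Set.mem_Ioi]; linarith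
  -- extended mixed partial
  have hKcont : ContinuousOn
      (fun p : ℝ × ℝ => deriv (fun t' => deriv (deriv (fun S' => V S' t')) p.1) p.2)
      (Set.Icc a b ×ˢ Set.Icc 0 T) :=
    hcont_tSS.mono (Set.prod_mono hsub (subset_refl _))
  obtain ⟨Kt, hKtc, hKteq⟩ := my_exists_cont_ext (isClosed_Icc.prod isClosed_Icc) hKcont
  -- extended d2 at t₀
  set d1 : ℝ → ℝ := deriv (fun S' => V S' t₀) with hd1def
  set d2 : ℝ → ℝ := deriv d1 with hd2def
  set d3 : ℝ → ℝ := deriv d2 with hd3def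
  set d4 : ℝ → ℝ := deriv d3 with hd4def
  have hd2cont : ContinuousOn d2 (Set.Icc a b) := by
    have h1 : ContinuousOn (fun w : ℝ => ((w, t₀) : ℝ × ℝ)) (Set.Icc a b) :=
      (continuous_id.prodMk continuous_const).continuousOn
    have h2 := hcont_SS.comp h1 (fun w hw => ⟨hsub hw, ht₀Icc⟩)
    simp only [hd2def, hd1def]
    exact h2
  obtain ⟨F2, hF2c, hF2eq⟩ := my_exists_cont_ext isClosed_Icc hd2cont
  -- parametric primitives
  set Lf : ℝ → ℝ → ℝ := fun u w => ∫ w' in S₀..w, Kt (w', u) with hLfdef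
  have hKswap : Continuous (Function.uncurry fun (u w' : ℝ) => Kt (w', u)) := by
    simp only [Function.uncurry_def]
    exact hKtc.comp continuous_swap
  have hLfc : Continuous (Function.uncurry Lf) := by
    have h := intervalIntegral.continuous_parametric_primitive_of_continuous
      (μ := volume) (a₀ := S₀) (f := fun (u w' : ℝ) => Kt (w', u)) hKswap
    simp only [hLfdef, Function.uncurry_def]
    exact h
  set Gf : ℝ → ℝ → ℝ := fun S u => ∫ w in S₀..S, Lf u w with hGfdef
  have hGfc2 : Continuous (fun p : ℝ × ℝ => ∫ w in S₀..p.2, Lf p.1 w) :=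
    intervalIntegral.continuous_parametric_primitive_of_continuous (μ := volume) hLfc
  have hGfS : ∀ S, Continuous (fun u => Gf S u) := by
    intro S
    simp only [hGfdef]
    exact hGfc2.comp₂ continuous_id continuous_const
  have hLft₀ : Continuous (Lf t₀) := by
    simp only [hLfdef]
    exact intervalIntegral.continuous_primitive
      (fun _ _ => (hKtc.comp (continuous_id.prodMk continuous_const)).intervalIntegrable _ _) S₀
  -- Step A : FTC in time for the second space derivative
  have hFTCt : ∀ w' ∈ Set.Icc a b, ∀ t ∈ Set.Icc 0 T,
      deriv (deriv (fun S' => V S' t)) w' = d2 w' + ∫ u in t₀..t, Kt (w', u) := by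
    intro w' hw' t ht
    have huIcc : Set.uIcc t₀ t ⊆ Set.Icc 0 T := Set.uIcc_subset_Icc ht₀Icc ht
    have heq : (∫ u in t₀..t, Kt (w', u))
        = deriv (deriv (fun S' => V S' t)) w' - deriv (deriv (fun S' => V S' t₀)) w' := by
      apply intervalIntegral.integral_eq_sub_of_hasDerivAt
        (f := fun u => deriv (deriv (fun S' => V S' u)) w')
      · intro u hu
        have hu' : u ∈ Set.Icc 0 T := huIcc hu
        have hd := (hdiff w' (hsub hw') u hu').2.2.2.2.2.hasDerivAt
        rw [hKteq (w', u) ⟨hw', hu'⟩]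
        exact hd
      · exact ((hKtc.comp (continuous_const.prodMk continuous_id)).intervalIntegrable _ _)
    rw [heq, hd2def, hd1def]
    ring
  -- Step B' : FTC in space for the first space derivative, with time split
  have hB' : ∀ S ∈ Set.Icc a b, ∀ t ∈ Set.Icc 0 T,
      deriv (fun S' => V S' t) S
        = deriv (fun S' => V S' t) S₀ + (∫ w' in S₀..S, F2 w') + ∫ u in t₀..t, Lf u S := by
    intro S hS t ht
    have huIcc : Set.uIcc S₀ S ⊆ Set.Icc a b := Set.uIcc_subset_Icc hS₀ab hS
    have hFTCS : (∫ w' in S₀..S, deriv (deriv (fun S' => V S' t)) w')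
        = deriv (fun S' => V S' t) S - deriv (fun S' => V S' t) S₀ := by
      apply intervalIntegral.integral_eq_sub_of_hasDerivAt
      · intro w' hw'
        exact (hdiff w' (hsub (huIcc hw')) t ht).2.2.1.hasDerivAt
      · exact (hcont_SS.comp ((continuous_id.prodMk continuous_const).continuousOn)
            (fun w hw => ⟨hsub (huIcc hw), ht⟩)).intervalIntegrable
    have hPcont : Continuous (fun w' => ∫ u in t₀..t, Kt (w', u)) :=
      intervalIntegral.continuous_parametric_intervalIntegral_of_continuous'
        (f := fun (w' u : ℝ) => Kt (w', u)) (by simp only [Function.uncurry_def]; exact hKtc) t₀ t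
    have hsplit : (∫ w' in S₀..S, deriv (deriv (fun S' => V S' t)) w')
        = (∫ w' in S₀..S, F2 w') + ∫ w' in S₀..S, ∫ u in t₀..t, Kt (w', u) := by
      rw [← intervalIntegral.integral_add (hF2c.intervalIntegrable _ _)
            (hPcont.intervalIntegrable _ _)]
      apply intervalIntegral.integral_congr
      intro w' hw'
      have hw'' := huIcc hw'
      show deriv (deriv (fun S' => V S' t)) w' = F2 w' + ∫ u in t₀..t, Kt (w', u)
      rw [hFTCt w' hw'' t ht, hF2eq w' hw'']
    have hswap : (∫ w' in S₀..S, ∫ u in t₀..t, Kt (w', u)) = ∫ u in t₀..t, Lf u S := by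
      have h := my_swap_cont (F := fun w' u => Kt (w', u))
        (by simp only [Function.uncurry_def]; exact hKtc) S₀ S t₀ t
      rw [h]
    rw [hswap] at hsplit
    linarith [hFTCS, hsplit]
  -- Step C : integral representation of V
  set QQ : ℝ → ℝ := fun S => ∫ w in S₀..S, ∫ w' in S₀..w, F2 w' with hQQdef
  set Bf : ℝ → ℝ := fun t => deriv (fun S' => V S' t) S₀ with hBfdef
  have hId : ∀ S ∈ Set.Icc a b, ∀ t ∈ Set.Icc 0 T,
      V S t = V S₀ t + (S - S₀) * Bf t + QQ S + ∫ u in t₀..t, Gf S u := by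
    intro S hS t ht
    have huIcc : Set.uIcc S₀ S ⊆ Set.Icc a b := Set.uIcc_subset_Icc hS₀ab hS
    have hFTC0 : (∫ w in S₀..S, deriv (fun S' => V S' t) w) = V S t - V S₀ t := by
      apply intervalIntegral.integral_eq_sub_of_hasDerivAt (f := fun S' => V S' t)
      · intro w hw; exact (hdiff w (hsub (huIcc hw)) t ht).2.1.hasDerivAt
      · exact (hcont_S.comp ((continuous_id.prodMk continuous_const).continuousOn)
          (fun w hw => ⟨hsub (huIcc hw), ht⟩)).intervalIntegrable
    have hQc : Continuous (fun w => ∫ w' in S₀..w, F2 w') :=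
      intervalIntegral.continuous_primitive (fun _ _ => hF2c.intervalIntegrable _ _) S₀
    have hswapLf : Continuous (Function.uncurry fun (w u : ℝ) => Lf u w) := by
      simp only [Function.uncurry_def]
      exact hLfc.comp₂ continuous_snd continuous_fst
    have hLcont2 : Continuous (fun w => ∫ u in t₀..t, Lf u w) :=
      intervalIntegral.continuous_parametric_intervalIntegral_of_continuous'
        (f := fun (w u : ℝ) => Lf u w) hswapLf t₀ t
    have hcongr : (∫ w in S₀..S, deriv (fun S' => V S' t) w)
        = ∫ w in S₀..S,
            (deriv (fun S' => V S' t) S₀ + ((∫ w' in S₀..w, F2 w') + ∫ u in t₀..t, Lf u w)) := by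
      apply intervalIntegral.integral_congr
      intro w hw
      show deriv (fun S' => V S' t) w
        = deriv (fun S' => V S' t) S₀ + ((∫ w' in S₀..w, F2 w') + ∫ u in t₀..t, Lf u w)
      rw [hB' w (huIcc hw) t ht]; ring
    have hsplit : (∫ w in S₀..S,
          (deriv (fun S' => V S' t) S₀ + ((∫ w' in S₀..w, F2 w') + ∫ u in t₀..t, Lf u w)))
        = (S - S₀) * deriv (fun S' => V S' t) S₀
          + ((∫ w in S₀..S, ∫ w' in S₀..w, F2 w') + ∫ w in S₀..S, ∫ u in t₀..t, Lf u w) := by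
      rw [intervalIntegral.integral_add (intervalIntegrable_const)
            ((hQc.intervalIntegrable _ _).add (hLcont2.intervalIntegrable _ _)),
          intervalIntegral.integral_add (hQc.intervalIntegrable _ _)
            (hLcont2.intervalIntegrable _ _),
          intervalIntegral.integral_const]
      simp [smul_eq_mul]
    have hswap2 : (∫ w in S₀..S, ∫ u in t₀..t, Lf u w) = ∫ u in t₀..t, Gf S u := by
      have h := my_swap_cont (F := fun w u => Lf u w) hswapLf S₀ S t₀ t
      rw [h]
    rw [hcongr, hsplit, hswap2] at hFTC0
    show V S t = V S₀ t + (S - S₀) * deriv (fun S' => V S' t) S₀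
      + (∫ w in S₀..S, ∫ w' in S₀..w, F2 w') + ∫ u in t₀..t, Gf S u
    linarith [hFTC0]
  -- Step D : differentiability of Bf in time
  set bb : ℝ := (deriv (fun t' => V b t') t₀ - deriv (fun t' => V S₀ t') t₀ - Gf b t₀) / (b - S₀)
    with hbbdef
  have hbS₀ : b - S₀ ≠ 0 := by rw [hbdef]; intro h; exact absurd (by linarith : S₀ = 0) hS₀pos.ne'
  have hBf : HasDerivWithinAt Bf bb (Set.Icc 0 T) t₀ := by
    have hVb : HasDerivAt (fun t => V b t) (deriv (fun t' => V b t') t₀) t₀ :=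
      (hdiff b (hsub hbab) t₀ ht₀Icc).1.hasDerivAt
    have hV0 : HasDerivAt (fun t => V S₀ t) (deriv (fun t' => V S₀ t') t₀) t₀ :=
      (hdiff S₀ (hsub hS₀ab) t₀ ht₀Icc).1.hasDerivAt
    have hGb : HasDerivAt (fun t => ∫ u in t₀..t, Gf b u) (Gf b t₀) t₀ :=
      my_hasDerivAt_primitive (hGfS b) t₀ t₀
    have hcomb : HasDerivAt
        (fun t => (V b t - V S₀ t - QQ b - (∫ u in t₀..t, Gf b u)) / (b - S₀)) bb t₀ := by
      rw [hbbdef]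
      exact (((hVb.sub hV0).sub_const (QQ b)).sub hGb).div_const (b - S₀)
    refine hcomb.hasDerivWithinAt.congr ?_ ?_
    · intro t ht
      show Bf t = (V b t - V S₀ t - QQ b - (∫ u in t₀..t, Gf b u)) / (b - S₀)
      rw [eq_div_iff hbS₀]
      have := hId b hbab t ht
      nlinarith [this]
    · show Bf t₀ = (V b t₀ - V S₀ t₀ - QQ b - (∫ u in t₀..t₀, Gf b u)) / (b - S₀)
      rw [eq_div_iff hbS₀]
      have := hId b hbab t₀ ht₀Icc
      nlinarith [this]
  -- Step E : mixed derivative identity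
  have hstar : ∀ S ∈ Set.Icc a b,
      deriv (fun t' => V S t') t₀ = deriv (fun t' => V S₀ t') t₀ + (S - S₀) * bb + Gf S t₀ := by
    intro S hS
    have h1 : HasDerivWithinAt (fun t => V S t) (deriv (fun t' => V S t') t₀) (Set.Icc 0 T) t₀ :=
      (hdiff S (hsub hS) t₀ ht₀Icc).1.hasDerivAt.hasDerivWithinAt
    have hV0 : HasDerivAt (fun t => V S₀ t) (deriv (fun t' => V S₀ t') t₀) t₀ :=
      (hdiff S₀ (hsub hS₀ab) t₀ ht₀Icc).1.hasDerivAt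
    have hGS : HasDerivAt (fun t => ∫ u in t₀..t, Gf S u) (Gf S t₀) t₀ :=
      my_hasDerivAt_primitive (hGfS S) t₀ t₀
    have h2' : HasDerivWithinAt
        (fun t => V S₀ t + (S - S₀) * Bf t + QQ S + ∫ u in t₀..t, Gf S u)
        (deriv (fun t' => V S₀ t') t₀ + (S - S₀) * bb + Gf S t₀) (Set.Icc 0 T) t₀ :=
      ((hV0.hasDerivWithinAt.add (hBf.const_mul (S - S₀))).add_const (QQ S)).add
        hGS.hasDerivWithinAt
    have h2 : HasDerivWithinAt (fun t => V S t)
        (deriv (fun t' => V S₀ t') t₀ + (S - S₀) * bb + Gf S t₀) (Set.Icc 0 T) t₀ :=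
      h2'.congr (fun t ht => hId S hS t ht) (hId S hS t₀ ht₀Icc)
    exact ((uniqueDiffOn_Icc hT) t₀ ht₀Icc).eq_deriv _ h1 h2
  -- Step F : the Black-Scholes equation turns this into an identity for Φ
  set Φ : ℝ → ℝ := fun S => 1/2 * σ (S * d2 S)^2 * S^2 * d2 S + (r - q) * S * d1 S - r * V S t₀
    with hΦdef
  have hPhiEq : ∀ S ∈ Set.Ioo a b,
      -Φ S = deriv (fun t' => V S₀ t') t₀ + (S - S₀) * bb + Gf S t₀ := by
    intro S hS
    have hSpos : 0 < S := hsub ⟨hS.1.le, hS.2.le⟩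
    have hbs := hBS S hSpos t₀ ht₀Ico
    have hst := hstar S ⟨hS.1.le, hS.2.le⟩
    rw [← hd1def, ← hd2def] at hbs
    show -(1/2 * σ (S * d2 S)^2 * S^2 * d2 S + (r - q) * S * d1 S - r * V S t₀)
      = deriv (fun t' => V S₀ t') t₀ + (S - S₀) * bb + Gf S t₀
    linarith [hbs, hst]
  -- σ derivative facts
  set σ1 : ℝ → ℝ := deriv σ with hσ1def
  set σ2 : ℝ → ℝ := deriv σ1 with hσ2def
  have hσd : ∀ u : ℝ, HasDerivAt σ (σ1 u) u := by
    intro u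
    rw [hσ1def]
    exact ((hσ.differentiable (by norm_num)) u).hasDerivAt
  have hσ1d : ∀ u : ℝ, HasDerivAt σ1 (σ2 u) u := by
    intro u
    have h2 : ContDiff ℝ (1 + 1) σ := by
      norm_num
      exact hσ
    have hd : ContDiff ℝ 1 (deriv σ) := (contDiff_succ_iff_deriv.mp h2).2.2
    rw [hσ2def, hσ1def]
    exact ((hd.differentiable (by norm_num)) u).hasDerivAt
  -- derivative pack for V in space at time t₀
  have hpack : ∀ S : ℝ, 0 < S →
      HasDerivAt (fun S' => V S' t₀) (d1 S) S ∧ HasDerivAt d1 (d2 S) S ∧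
      HasDerivAt d2 (d3 S) S ∧ HasDerivAt d3 (d4 S) S := by
    intro S hS
    obtain ⟨_, h1, h2, h3, h4, _⟩ := hdiff S hS t₀ ht₀Icc
    refine ⟨?_, ?_, ?_, ?_⟩
    · have := h1.hasDerivAt; rw [← hd1def] at this; exact this
    · have := h2.hasDerivAt; rw [← hd1def, ← hd2def] at this; exact this
    · have := h3.hasDerivAt; rw [← hd1def, ← hd2def, ← hd3def] at this; exact this
    · have := h4.hasDerivAt; rw [← hd1def, ← hd2def, ← hd3def, ← hd4def] at this; exact this
  -- Step G : first derivative of Φ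
  set Φ1 : ℝ → ℝ := fun S =>
      σ (S * d2 S) * (σ1 (S * d2 S) * (d2 S + S * d3 S)) * S^2 * d2 S
      + σ (S * d2 S)^2 * S * d2 S
      + 1/2 * σ (S * d2 S)^2 * S^2 * d3 S
      + (r - q) * (d1 S + S * d2 S) - r * d1 S with hΦ1def
  have hΦ1 : ∀ S : ℝ, 0 < S → HasDerivAt Φ (Φ1 S) S := by
    intro S hS
    obtain ⟨hA1, hA2, hA3, hA4⟩ := hpack S hS
    have hg : HasDerivAt (fun S => S * d2 S) (1 * d2 S + S * d3 S) S :=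
      (hasDerivAt_id' S).mul hA3
    have hσg : HasDerivAt (fun S => σ (S * d2 S))
        (σ1 (S * d2 S) * (1 * d2 S + S * d3 S)) S := (hσd (S * d2 S)).comp S hg
    have ht1 := (((hσg.pow 2).const_mul (1/2 : ℝ)).mul (hasDerivAt_pow 2 S)).mul hA3
    have ht2 := (((hasDerivAt_id' S).const_mul (r - q))).mul hA2
    have ht3 := hA1.const_mul r
    have h := (ht1.add ht2).sub ht3
    have hval : HasDerivAt
        (fun S => 1/2 * σ (S * d2 S)^2 * S^2 * d2 S + (r - q) * S * d1 S - r * V S t₀)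
        (Φ1 S) S := by
      refine h.congr_deriv ?_
      simp only [hΦ1def, Pi.pow_apply, Pi.mul_apply, Pi.add_apply, Function.comp_apply]
      push_cast
      ring
    exact hval
  have hueq : ∀ S ∈ Set.Ioo a b, Φ1 S = -(bb + Lf t₀ S) := by
    intro S hS
    have hSpos : 0 < S := hsub ⟨hS.1.le, hS.2.le⟩
    have hGd : HasDerivAt (fun S => Gf S t₀) (Lf t₀ S) S :=
      my_hasDerivAt_primitive hLft₀ S₀ S
    have hψ : HasDerivAt
        (fun S => deriv (fun t' => V S₀ t') t₀ + (S - S₀) * bb + Gf S t₀) (bb + Lf t₀ S) S := by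
      have h := ((hasDerivAt_const S (deriv (fun t' => V S₀ t') t₀)).add
          (((hasDerivAt_id' S).sub_const S₀).mul_const bb)).add hGd
      refine h.congr_deriv ?_
      ring
    have hev : (fun S => -Φ S) =ᶠ[nhds S]
        (fun S => deriv (fun t' => V S₀ t') t₀ + (S - S₀) * bb + Gf S t₀) := by
      filter_upwards [isOpen_Ioo.mem_nhds hS] with y hy
      exact hPhiEq y hy
    have hΦneg : HasDerivAt (fun S => -Φ S) (bb + Lf t₀ S) S := hψ.congr_of_eventuallyEq hev
    have h2 : HasDerivAt (fun S => -Φ S) (-Φ1 S) S := (hΦ1 S hSpos).neg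
    have := h2.unique hΦneg
    linarith [this]
  -- Step G2 : second derivative of Φ at S₀
  set Φ2val : ℝ :=
      (σ1 (S₀ * d2 S₀) * (d2 S₀ + S₀ * d3 S₀))^2 * S₀^2 * d2 S₀
      + σ (S₀ * d2 S₀) * (σ2 (S₀ * d2 S₀) * (d2 S₀ + S₀ * d3 S₀)) * (d2 S₀ + S₀ * d3 S₀) * S₀^2 * d2 S₀
      + σ (S₀ * d2 S₀) * (σ1 (S₀ * d2 S₀) * (2 * d3 S₀ + S₀ * d4 S₀)) * S₀^2 * d2 S₀
      + σ (S₀ * d2 S₀) * (σ1 (S₀ * d2 S₀) * (d2 S₀ + S₀ * d3 S₀)) * (2 * S₀) * d2 S₀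
      + σ (S₀ * d2 S₀) * (σ1 (S₀ * d2 S₀) * (d2 S₀ + S₀ * d3 S₀)) * S₀^2 * d3 S₀
      + 2 * σ (S₀ * d2 S₀) * (σ1 (S₀ * d2 S₀) * (d2 S₀ + S₀ * d3 S₀)) * S₀ * d2 S₀
      + σ (S₀ * d2 S₀)^2 * d2 S₀ + σ (S₀ * d2 S₀)^2 * S₀ * d3 S₀
      + σ (S₀ * d2 S₀) * (σ1 (S₀ * d2 S₀) * (d2 S₀ + S₀ * d3 S₀)) * S₀^2 * d3 S₀
      + σ (S₀ * d2 S₀)^2 * S₀ * d3 S₀ + 1/2 * σ (S₀ * d2 S₀)^2 * S₀^2 * d4 S₀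
      + (r - q) * (2 * d2 S₀ + S₀ * d3 S₀) - r * d2 S₀ with hΦ2valdef
  have hΦ2 : HasDerivAt Φ1 Φ2val S₀ := by
    obtain ⟨hA1, hA2, hA3, hA4⟩ := hpack S₀ hS₀pos
    have hg : HasDerivAt (fun S => S * d2 S) (1 * d2 S₀ + S₀ * d3 S₀) S₀ :=
      (hasDerivAt_id' S₀).mul hA3
    have hσg : HasDerivAt (fun S => σ (S * d2 S))
        (σ1 (S₀ * d2 S₀) * (1 * d2 S₀ + S₀ * d3 S₀)) S₀ := (hσd (S₀ * d2 S₀)).comp S₀ hg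
    have hσ1g : HasDerivAt (fun S => σ1 (S * d2 S))
        (σ2 (S₀ * d2 S₀) * (1 * d2 S₀ + S₀ * d3 S₀)) S₀ := by
        have := (hσ1d (S₀ * d2 S₀)).comp S₀ hg; exact this
    have hgp : HasDerivAt (fun S => d2 S + S * d3 S)
        (d3 S₀ + (1 * d3 S₀ + S₀ * d4 S₀)) S₀ := hA3.add ((hasDerivAt_id' S₀).mul hA4)
    have ht1 := ((hσg.mul (hσ1g.mul hgp)).mul (hasDerivAt_pow 2 S₀)).mul hA3
    have ht2 := ((hσg.pow 2).mul (hasDerivAt_id' S₀)).mul hA3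
    have ht3 := (((hσg.pow 2).const_mul (1/2 : ℝ)).mul (hasDerivAt_pow 2 S₀)).mul hA4
    have ht4 := (hA2.add ((hasDerivAt_id' S₀).mul hA3)).const_mul (r - q)
    have ht5 := hA2.const_mul r
    have h := (((ht1.add ht2).add ht3).add ht4).sub ht5
    have hval : HasDerivAt
        (fun S => σ (S * d2 S) * (σ1 (S * d2 S) * (d2 S + S * d3 S)) * S^2 * d2 S
          + σ (S * d2 S)^2 * S * d2 S
          + 1/2 * σ (S * d2 S)^2 * S^2 * d3 S
          + (r - q) * (d1 S + S * d2 S) - r * d1 S) Φ2val S₀ := by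
      refine h.congr_deriv ?_
      simp only [hΦ2valdef, Pi.pow_apply, Pi.mul_apply, Pi.add_apply, Function.comp_apply]
      push_cast
      ring
    exact hval
  have hKid : Φ2val = -Kt (S₀, t₀) := by
    have hKt₀c : Continuous (fun w' => Kt (w', t₀)) :=
      hKtc.comp (continuous_id.prodMk continuous_const)
    have hL2 : HasDerivAt (fun S => -(bb + Lf t₀ S)) (-Kt (S₀, t₀)) S₀ := by
      have h := ((hasDerivAt_const S₀ bb).add (my_hasDerivAt_primitive hKt₀c S₀ S₀)).neg
      refine h.congr_deriv ?_
      ring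
    have hev2 : Φ1 =ᶠ[nhds S₀] (fun S => -(bb + Lf t₀ S)) := by
      filter_upwards [isOpen_Ioo.mem_nhds ⟨haS₀, hS₀b⟩] with y hy
      exact hueq y hy
    have h2 : HasDerivAt Φ1 (-Kt (S₀, t₀)) S₀ := hL2.congr_of_eventuallyEq hev2
    exact hΦ2.unique h2
  -- Step H : left-hand side of the goal
  have hLHS : deriv (fun s => H x s) τ = S₀ * (Kt (S₀, t₀) * (-1)) := by
    have hW : HasDerivAt (fun t' => deriv (deriv (fun S' => V S' t')) S₀) (Kt (S₀, t₀)) t₀ := by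
      have h := (hdiff S₀ (hsub hS₀ab) t₀ ht₀Icc).2.2.2.2.2.hasDerivAt
      rw [hKteq (S₀, t₀) ⟨hS₀ab, ht₀Icc⟩]
      exact h
    have hW' : HasDerivAt (fun t' => deriv (deriv (fun S' => V S' t')) S₀) (Kt (S₀, t₀))
        (T - τ) := by
      rw [← ht₀def]; exact hW
    have h1 : HasDerivAt (fun s : ℝ => T - s) (-1) τ := by
      have := (hasDerivAt_id τ).const_sub T
      exact this
    have hcomp : HasDerivAt (fun s => deriv (deriv (fun S' => V S' (T - s))) S₀)
        (Kt (S₀, t₀) * (-1)) τ := hW'.comp τ h1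
    have hfun : (fun s => H x s) = fun s => S₀ * deriv (deriv (fun S' => V S' (T - s))) S₀ := by
      funext s
      rw [hH x s, hS₀def]
    rw [hfun]
    exact (hcomp.const_mul S₀).deriv
  -- Step I : right-hand side computations
  set hh : ℝ → ℝ := fun y => Real.exp y * d2 (Real.exp y) with hhdef
  set hh1 : ℝ → ℝ := fun y =>
      Real.exp y * d2 (Real.exp y) + Real.exp y * (d3 (Real.exp y) * Real.exp y) with hh1def
  set hh2 : ℝ → ℝ := fun y =>
      Real.exp y * d2 (Real.exp y) + 3 * Real.exp y ^ 2 * d3 (Real.exp y)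
        + Real.exp y ^ 3 * d4 (Real.exp y) with hh2def
  have hHy : ∀ y, H y τ = hh y := by
    intro y
    rw [hH y τ, ← ht₀def, ← hd1def, ← hd2def]
  have hhh : ∀ y, HasDerivAt hh (hh1 y) y := by
    intro y
    have hE := Real.hasDerivAt_exp y
    have hd2y : HasDerivAt d2 (d3 (Real.exp y)) (Real.exp y) :=
      (hpack _ (Real.exp_pos y)).2.2.1
    have h := hE.mul (hd2y.comp y hE)
    rw [hhdef, hh1def]
    exact h
  have hhh1 : ∀ y, HasDerivAt hh1 (hh2 y) y := by
    intro y
    have hE := Real.hasDerivAt_exp y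
    have hd2y : HasDerivAt d2 (d3 (Real.exp y)) (Real.exp y) :=
      (hpack _ (Real.exp_pos y)).2.2.1
    have hd3y : HasDerivAt d3 (d4 (Real.exp y)) (Real.exp y) :=
      (hpack _ (Real.exp_pos y)).2.2.2
    have h := (hE.mul (hd2y.comp y hE)).add (hE.mul ((hd3y.comp y hE).mul hE))
    rw [hh1def, hh2def]
    refine h.congr_deriv ?_
    try simp only [Pi.pow_apply, Pi.mul_apply, Pi.add_apply, Function.comp_apply]
    ring
  set bder : ℝ → ℝ := fun y =>
      σ (hh y) * (σ1 (hh y) * hh1 y) * hh y + 1/2 * σ (hh y)^2 * hh1 y with hbderdef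
  have hB0 : ∀ y, HasDerivAt (fun y' => 1/2 * σ (hh y')^2 * hh y') (bder y) y := by
    intro y
    have hσhh : HasDerivAt (fun y' => σ (hh y')) (σ1 (hh y) * hh1 y) y :=
      (hσd (hh y)).comp y (hhh y)
    have h := ((hσhh.pow 2).const_mul (1/2 : ℝ)).mul (hhh y)
    rw [hbderdef]
    refine h.congr_deriv ?_
    try simp only [Pi.pow_apply, Pi.mul_apply, Pi.add_apply, Function.comp_apply]
    push_cast
    ring
  set bder2 : ℝ :=
      (σ1 (hh x) * hh1 x)^2 * hh x + σ (hh x) * (σ2 (hh x) * hh1 x) * hh1 x * hh x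
      + σ (hh x) * (σ1 (hh x) * hh2 x) * hh x
      + 2 * (σ (hh x) * (σ1 (hh x) * hh1 x) * hh1 x)
      + 1/2 * σ (hh x)^2 * hh2 x with hbder2def
  have hbder : HasDerivAt bder bder2 x := by
    have hσhh : HasDerivAt (fun y' => σ (hh y')) (σ1 (hh x) * hh1 x) x :=
      (hσd (hh x)).comp x (hhh x)
    have hσ1hh : HasDerivAt (fun y' => σ1 (hh y')) (σ2 (hh x) * hh1 x) x :=
      (hσ1d (hh x)).comp x (hhh x)
    have h := ((hσhh.mul (hσ1hh.mul (hhh1 x))).mul (hhh x)).add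
      (((hσhh.pow 2).const_mul (1/2 : ℝ)).mul (hhh1 x))
    rw [hbderdef, hbder2def]
    refine h.congr_deriv ?_
    try simp only [Pi.pow_apply, Pi.mul_apply, Pi.add_apply, Function.comp_apply]
    push_cast
    ring
  -- Step J : assemble
  have hfun1 : (fun y => (1 / 2) * (σ (H y τ))^2 * H y τ)
      = fun y => 1/2 * σ (hh y)^2 * hh y := by
    funext y; rw [hHy y]
  have hderivB : deriv (fun y => 1/2 * σ (hh y)^2 * hh y) = bder :=
    funext fun y => (hB0 y).deriv
  have hfunH : (fun y => H y τ) = hh := funext fun y => hHy y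
  rw [hLHS, hfun1, hderivB, hfunH, hbder.deriv, hHy x, (hhh x).deriv]
  have hKt : Kt (S₀, t₀) = -Φ2val := by rw [hKid]; ring
  rw [hKt]
  simp only [hΦ2valdef, hbder2def, hbderdef, hh2def, hh1def, hhdef, ← hS₀def]
  ring
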